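/- arXiv:2309.12384 — 5 statements merged into one kernel-verified Lean document; each statement's English description precedes it below -/
import Mathlib

section
/- Assume the mesh conditions k·|θ − x_p|·Δx ≤ σ² for every p ∈ S (the paper states this as Δx ≤ σ²/(kθ)) and λ·Δt·Î ≤ 1. Then the BTCS scheme is stable: every solution (Φ^q)_{q=0,…,T_max} satisfies max_{p∈P} |Φ^q_p| ≤ max_{p∈P} |Φ^0_p| for every q = 0,…,T_max. (Paper: stability part of the Proposition on the one-dimensional scheme.) -/
open Finset

/-- Stability of the implicit BTCS scheme for the one-dimensional
Lévy-driven OU PIDE: under the mesh conditions `k·|θ - x_p|·Δx ≤ σ²` (for `p` in the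
interior index set `S`) and `λ·Δt·Î ≤ 1`, every solution of the scheme satisfies
`max_{p ∈ P} |Φ^q_p| ≤ max_{p ∈ P} |Φ^0_p|` for every `q = 0, …, Tmax`. -/
theorem stmt_8
    (Δx Δt σ k θ lam x₀ : ℝ)
    (hΔx : 0 < Δx) (hΔt : 0 < Δt) (hσ : 0 < σ) (hk : 0 ≤ k) (hlam : 0 < lam)
    (J N : ℕ) (hJ : Even J)
    (fbar : ℤ → ℝ)
    (hfbar : ∀ i ∈ Finset.Icc (-(J / 2 : ℤ)) (J / 2 : ℤ), 0 ≤ fbar i)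
    (Ihat : ℝ) (hIhat : Ihat = ∑ i ∈ Finset.Icc (-(J / 2 : ℤ)) (J / 2 : ℤ), fbar i * Δx)
    (P S : Finset ℤ)
    (hP : P = Finset.Icc 0 ((N : ℤ) - 1))
    (hS : S ⊆ Finset.Icc 1 ((N : ℤ) - 2))
    (hSP : ∀ p ∈ S, ∀ i ∈ Finset.Icc (-(J / 2 : ℤ)) (J / 2 : ℤ), p + i ∈ P)
    (x : ℤ → ℝ) (hx : ∀ p, x p = x₀ + (p : ℝ) * Δx)
    (c a b : ℤ → ℝ)
    (hc : ∀ p, c p = σ ^ 2 / (2 * Δx ^ 2) - k * (θ - x p) / (2 * Δx))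
    (ha : ∀ p, a p = σ ^ 2 / Δx ^ 2)
    (hb : ∀ p, b p = σ ^ 2 / (2 * Δx ^ 2) + k * (θ - x p) / (2 * Δx))
    (Tmax : ℕ) (Φ : ℕ → ℤ → ℝ)
    -- the implicit BTCS scheme, interior rows
    (hscheme : ∀ q < Tmax, ∀ p ∈ S,
      -(c p) * Δt * Φ (q + 1) (p - 1) + (1 + a p * Δt) * Φ (q + 1) p
          - b p * Δt * Φ (q + 1) (p + 1)
        = (1 - lam * Δt * Ihat) * Φ q p
          + lam * Δt *
            ∑ i ∈ Finset.Icc (-(J / 2 : ℤ)) (J / 2 : ℤ), Φ q (p + i) * fbar i * Δx)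
    -- Dirichlet boundary rows
    (hbdry : ∀ q < Tmax, ∀ p ∈ P \ S, Φ (q + 1) p = Φ q p)
    -- mesh conditions
    (hmesh1 : ∀ p ∈ S, k * |θ - x p| * Δx ≤ σ ^ 2)
    (hmesh2 : lam * Δt * Ihat ≤ 1) :
    ∀ q ≤ Tmax, ∀ M : ℝ, (∀ p ∈ P, |Φ 0 p| ≤ M) → ∀ p ∈ P, |Φ q p| ≤ M := by

  have hIhat0 : 0 ≤ Ihat := by
    rw [hIhat]
    exact Finset.sum_nonneg fun i hi => mul_nonneg (hfbar i hi) hΔx.le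
  intro q hq M hM0
  induction q with
  | zero => exact hM0
  | succ q ih =>
    have hqT : q < Tmax := hq
    have IH : ∀ p ∈ P, |Φ q p| ≤ M := ih (le_of_lt hqT)
    intro p hp
    obtain ⟨p₀, hp₀P, hp₀max⟩ :=
      Finset.exists_max_image P (fun p => |Φ (q + 1) p|) ⟨p, hp⟩
    have key : |Φ (q + 1) p₀| ≤ M := by
      by_cases hpS : p₀ ∈ S
      · -- interior case
        have hM : 0 ≤ M := le_trans (abs_nonneg _) (IH p₀ hp₀P)
        have hmem := hS hpS
        rw [Finset.mem_Icc] at hmem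
        have hmemL : p₀ - 1 ∈ P := by rw [hP, Finset.mem_Icc]; omega
        have hmemR : p₀ + 1 ∈ P := by rw [hP, Finset.mem_Icc]; omega
        have hc0 : 0 ≤ c p₀ := by
          have hkey : k * (θ - x p₀) * Δx ≤ σ ^ 2 := by
            refine le_trans ?_ (hmesh1 p₀ hpS)
            exact mul_le_mul_of_nonneg_right
              (mul_le_mul_of_nonneg_left (le_abs_self _) hk) hΔx.le
          rw [hc, sub_nonneg, div_le_div_iff₀ (by positivity) (by positivity)]
          nlinarith
        have hb0 : 0 ≤ b p₀ := by
          have hkey : k * (-(θ - x p₀)) * Δx ≤ σ ^ 2 := by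
            refine le_trans ?_ (hmesh1 p₀ hpS)
            exact mul_le_mul_of_nonneg_right
              (mul_le_mul_of_nonneg_left (neg_le_abs _) hk) hΔx.le
          rw [hb]
          have h1 : -(k * (θ - x p₀) / (2 * Δx)) ≤ σ ^ 2 / (2 * Δx ^ 2) := by
            rw [← neg_div, div_le_div_iff₀ (by positivity) (by positivity)]
            nlinarith
          linarith
        have hcb : c p₀ + b p₀ = a p₀ := by
          rw [hc, hb, ha]; field_simp; ring
        have ha0 : 0 ≤ a p₀ := by rw [ha]; positivity
        have hpos : (0:ℝ) < 1 + a p₀ * Δt := by nlinarith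
        have heq := hscheme q hqT p₀ hpS
        have hrw : (1 + a p₀ * Δt) * Φ (q + 1) p₀ =
            c p₀ * Δt * Φ (q + 1) (p₀ - 1) + b p₀ * Δt * Φ (q + 1) (p₀ + 1) +
              ((1 - lam * Δt * Ihat) * Φ q p₀ +
                lam * Δt *
                  ∑ i ∈ Finset.Icc (-(J / 2 : ℤ)) (J / 2 : ℤ),
                    Φ q (p₀ + i) * fbar i * Δx) := by linarith
        set M' := |Φ (q + 1) p₀| with hM'
        have hA : |c p₀ * Δt * Φ (q + 1) (p₀ - 1)| ≤ c p₀ * Δt * M' := by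
          rw [abs_mul, abs_mul, abs_of_nonneg hc0, abs_of_nonneg hΔt.le]
          exact mul_le_mul_of_nonneg_left (hp₀max _ hmemL) (by positivity)
        have hB : |b p₀ * Δt * Φ (q + 1) (p₀ + 1)| ≤ b p₀ * Δt * M' := by
          rw [abs_mul, abs_mul, abs_of_nonneg hb0, abs_of_nonneg hΔt.le]
          exact mul_le_mul_of_nonneg_left (hp₀max _ hmemR) (by positivity)
        have hC : |(1 - lam * Δt * Ihat) * Φ q p₀| ≤ (1 - lam * Δt * Ihat) * M := by
          rw [abs_mul, abs_of_nonneg (by linarith)]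
          exact mul_le_mul_of_nonneg_left (IH p₀ hp₀P) (by linarith)
        have hsum : |∑ i ∈ Finset.Icc (-(J / 2 : ℤ)) (J / 2 : ℤ),
            Φ q (p₀ + i) * fbar i * Δx| ≤ M * Ihat := by
          rw [hIhat, Finset.mul_sum]
          refine (Finset.abs_sum_le_sum_abs _ _).trans (Finset.sum_le_sum fun i hi => ?_)
          have hf := hfbar i hi
          have hΦ := IH _ (hSP p₀ hpS i hi)
          rw [abs_mul, abs_mul, abs_of_nonneg hf, abs_of_nonneg hΔx.le]
          have h1 : |Φ q (p₀ + i)| * fbar i * Δx ≤ M * fbar i * Δx := by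
            have := mul_le_mul_of_nonneg_right
              (mul_le_mul_of_nonneg_right hΦ hf) hΔx.le
            linarith
          linarith [h1, (by ring : M * (fbar i * Δx) = M * fbar i * Δx)]
        have hD : |lam * Δt *
            ∑ i ∈ Finset.Icc (-(J / 2 : ℤ)) (J / 2 : ℤ),
              Φ q (p₀ + i) * fbar i * Δx| ≤ lam * Δt * (M * Ihat) := by
          rw [abs_mul]
          have : |lam * Δt| = lam * Δt := abs_of_nonneg (by positivity)
          rw [this]
          exact mul_le_mul_of_nonneg_left hsum (by positivity)
        have hfin : (1 + a p₀ * Δt) * M' ≤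
            c p₀ * Δt * M' + b p₀ * Δt * M' +
              ((1 - lam * Δt * Ihat) * M + lam * Δt * (M * Ihat)) := by
          calc (1 + a p₀ * Δt) * M' = |(1 + a p₀ * Δt) * Φ (q + 1) p₀| := by
                rw [abs_mul, abs_of_pos hpos]
            _ = |c p₀ * Δt * Φ (q + 1) (p₀ - 1) + b p₀ * Δt * Φ (q + 1) (p₀ + 1) +
                  ((1 - lam * Δt * Ihat) * Φ q p₀ +
                    lam * Δt *
                      ∑ i ∈ Finset.Icc (-(J / 2 : ℤ)) (J / 2 : ℤ),
                        Φ q (p₀ + i) * fbar i * Δx)| := by rw [hrw]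
            _ ≤ |c p₀ * Δt * Φ (q + 1) (p₀ - 1) + b p₀ * Δt * Φ (q + 1) (p₀ + 1)| +
                  |(1 - lam * Δt * Ihat) * Φ q p₀ +
                    lam * Δt *
                      ∑ i ∈ Finset.Icc (-(J / 2 : ℤ)) (J / 2 : ℤ),
                        Φ q (p₀ + i) * fbar i * Δx| := abs_add_le _ _
            _ ≤ (|c p₀ * Δt * Φ (q + 1) (p₀ - 1)| + |b p₀ * Δt * Φ (q + 1) (p₀ + 1)|) +
                  (|(1 - lam * Δt * Ihat) * Φ q p₀| +
                    |lam * Δt *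
                      ∑ i ∈ Finset.Icc (-(J / 2 : ℤ)) (J / 2 : ℤ),
                        Φ q (p₀ + i) * fbar i * Δx|) :=
                add_le_add (abs_add_le _ _) (abs_add_le _ _)
            _ ≤ _ := by linarith
        have hsimp : (1 - lam * Δt * Ihat) * M + lam * Δt * (M * Ihat) = M := by ring
        have habΔt : c p₀ * Δt * M' + b p₀ * Δt * M' = a p₀ * Δt * M' := by
          rw [← hcb]; ring
        linarith
      · rw [hbdry q hqT p₀ (Finset.mem_sdiff.mpr ⟨hp₀P, hpS⟩)]
        exact IH p₀ hp₀P
    exact le_trans (hp₀max p hp) key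
end

section
/- Assume the mesh conditions k·|θ − x_p|·Δx ≤ σ² for every p ∈ S (the paper states this as Δx ≤ σ²/(kθ)) and λ·Δt·Î ≤ 1. Then the BTCS scheme is monotone (discrete comparison principle): if (Φ^q) and (Φ̃^q) are two solutions of the scheme with Φ^0_p ≥ Φ̃^0_p for all p ∈ P, then Φ^q_p ≥ Φ̃^q_p for all p ∈ P and all q = 0,…,T_max. (Paper: monotonicity part of the Proposition on the one-dimensional scheme.) -/
open Finset

/-- Monotonicity (discrete comparison principle) of the implicit BTCS
scheme for the one-dimensional Lévy-driven OU PIDE: under the mesh conditions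
`k·|θ - x_p|·Δx ≤ σ²` (for `p` in the interior index set `S`) and `λ·Δt·Î ≤ 1`,
if two solutions satisfy `Φ^0 ≥ Φ̃^0` on `P` then `Φ^q ≥ Φ̃^q` on `P` for all
`q = 0, …, Tmax`. -/
theorem stmt_9
    (Δx Δt σ k θ lam x₀ : ℝ)
    (hΔx : 0 < Δx) (hΔt : 0 < Δt) (hσ : 0 < σ) (hk : 0 ≤ k) (hlam : 0 < lam)
    (J N : ℕ) (hJ : Even J)
    (fbar : ℤ → ℝ)
    (hfbar : ∀ i ∈ Finset.Icc (-(J / 2 : ℤ)) (J / 2 : ℤ), 0 ≤ fbar i)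
    (Ihat : ℝ) (hIhat : Ihat = ∑ i ∈ Finset.Icc (-(J / 2 : ℤ)) (J / 2 : ℤ), fbar i * Δx)
    (P S : Finset ℤ)
    (hP : P = Finset.Icc 0 ((N : ℤ) - 1))
    (hS : S ⊆ Finset.Icc 1 ((N : ℤ) - 2))
    (hSP : ∀ p ∈ S, ∀ i ∈ Finset.Icc (-(J / 2 : ℤ)) (J / 2 : ℤ), p + i ∈ P)
    (x : ℤ → ℝ) (hx : ∀ p, x p = x₀ + (p : ℝ) * Δx)
    (c a b : ℤ → ℝ)
    (hc : ∀ p, c p = σ ^ 2 / (2 * Δx ^ 2) - k * (θ - x p) / (2 * Δx))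
    (ha : ∀ p, a p = σ ^ 2 / Δx ^ 2)
    (hb : ∀ p, b p = σ ^ 2 / (2 * Δx ^ 2) + k * (θ - x p) / (2 * Δx))
    (Tmax : ℕ) (Φ Φt : ℕ → ℤ → ℝ)
    -- the implicit BTCS scheme for Φ, interior rows
    (hscheme : ∀ q < Tmax, ∀ p ∈ S,
      -(c p) * Δt * Φ (q + 1) (p - 1) + (1 + a p * Δt) * Φ (q + 1) p
          - b p * Δt * Φ (q + 1) (p + 1)
        = (1 - lam * Δt * Ihat) * Φ q p
          + lam * Δt *
            ∑ i ∈ Finset.Icc (-(J / 2 : ℤ)) (J / 2 : ℤ), Φ q (p + i) * fbar i * Δx)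
    (hbdry : ∀ q < Tmax, ∀ p ∈ P \ S, Φ (q + 1) p = Φ q p)
    -- the implicit BTCS scheme for Φ̃, interior rows
    (hscheme' : ∀ q < Tmax, ∀ p ∈ S,
      -(c p) * Δt * Φt (q + 1) (p - 1) + (1 + a p * Δt) * Φt (q + 1) p
          - b p * Δt * Φt (q + 1) (p + 1)
        = (1 - lam * Δt * Ihat) * Φt q p
          + lam * Δt *
            ∑ i ∈ Finset.Icc (-(J / 2 : ℤ)) (J / 2 : ℤ), Φt q (p + i) * fbar i * Δx)
    (hbdry' : ∀ q < Tmax, ∀ p ∈ P \ S, Φt (q + 1) p = Φt q p)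
    -- mesh conditions
    (hmesh1 : ∀ p ∈ S, k * |θ - x p| * Δx ≤ σ ^ 2)
    (hmesh2 : lam * Δt * Ihat ≤ 1)
    -- comparison of initial data
    (hinit : ∀ p ∈ P, Φt 0 p ≤ Φ 0 p) :
    ∀ q ≤ Tmax, ∀ p ∈ P, Φt q p ≤ Φ q p := by
  intro q
  induction q with
  | zero => intro _ p hp; exact hinit p hp
  | succ q ih =>
    intro hq p hp
    have hqT : q < Tmax := Nat.lt_of_succ_le hq
    have ihq : ∀ r ∈ P, Φt q r ≤ Φ q r := ih (le_of_lt hqT)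
    obtain ⟨pm, hpmP, hpm⟩ :=
      Finset.exists_min_image P (fun r => Φ (q+1) r - Φt (q+1) r) ⟨p, hp⟩
    have key : 0 ≤ Φ (q+1) pm - Φt (q+1) pm := by
      by_cases hpmS : pm ∈ S
      · -- interior point
        have hmem := hS hpmS
        simp only [Finset.mem_Icc] at hmem
        have hPm : pm - 1 ∈ P := by rw [hP]; simp only [Finset.mem_Icc]; omega
        have hPp : pm + 1 ∈ P := by rw [hP]; simp only [Finset.mem_Icc]; omega
        have h1 : k * (θ - x pm) ≤ k * |θ - x pm| :=
          mul_le_mul_of_nonneg_left (le_abs_self _) hk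
        have h1' : k * (-(θ - x pm)) ≤ k * |θ - x pm| :=
          mul_le_mul_of_nonneg_left (neg_le_abs _) hk
        have h2 := hmesh1 pm hpmS
        have hcnn : 0 ≤ c pm := by
          rw [hc, sub_nonneg, div_le_div_iff₀ (by positivity) (by positivity)]
          nlinarith [mul_le_mul_of_nonneg_right h1 (by positivity : (0:ℝ) ≤ 2*Δx^2),
            mul_le_mul_of_nonneg_right h2 (by positivity : (0:ℝ) ≤ 2*Δx)]
        have hbnn : 0 ≤ b pm := by
          rw [hb]
          have : -(σ ^ 2 / (2 * Δx ^ 2)) ≤ k * (θ - x pm) / (2 * Δx) := by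
            rw [neg_le, ← neg_div, div_le_div_iff₀ (by positivity) (by positivity)]
            nlinarith [mul_le_mul_of_nonneg_right h1' (by positivity : (0:ℝ) ≤ 2*Δx^2),
              mul_le_mul_of_nonneg_right h2 (by positivity : (0:ℝ) ≤ 2*Δx)]
          linarith
        have hA : a pm = c pm + b pm := by
          rw [ha, hb, hc]
          field_simp
          ring
        have e1 := hscheme q hqT pm hpmS
        have e2 := hscheme' q hqT pm hpmS
        have hsum : (∑ i ∈ Finset.Icc (-(J / 2 : ℤ)) (J / 2 : ℤ),
              (Φ q (pm + i) - Φt q (pm + i)) * fbar i * Δx)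
            = (∑ i ∈ Finset.Icc (-(J / 2 : ℤ)) (J / 2 : ℤ), Φ q (pm + i) * fbar i * Δx)
              - ∑ i ∈ Finset.Icc (-(J / 2 : ℤ)) (J / 2 : ℤ), Φt q (pm + i) * fbar i * Δx := by
          rw [← Finset.sum_sub_distrib]
          exact Finset.sum_congr rfl fun i _ => by ring
        have heq : Φ (q+1) pm - Φt (q+1) pm
            = (1 - lam * Δt * Ihat) * (Φ q pm - Φt q pm)
              + lam * Δt * (∑ i ∈ Finset.Icc (-(J / 2 : ℤ)) (J / 2 : ℤ),
                  (Φ q (pm + i) - Φt q (pm + i)) * fbar i * Δx)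
              + c pm * Δt * ((Φ (q+1) (pm-1) - Φt (q+1) (pm-1)) - (Φ (q+1) pm - Φt (q+1) pm))
              + b pm * Δt * ((Φ (q+1) (pm+1) - Φt (q+1) (pm+1)) - (Φ (q+1) pm - Φt (q+1) pm)) := by
          linear_combination e1 - e2 - lam * Δt * hsum
            - Δt * (Φ (q+1) pm - Φt (q+1) pm) * hA
        have hR1 : 0 ≤ (1 - lam * Δt * Ihat) * (Φ q pm - Φt q pm) :=
          mul_nonneg (by linarith) (sub_nonneg.mpr (ihq pm hpmP))
        have hSd : 0 ≤ ∑ i ∈ Finset.Icc (-(J / 2 : ℤ)) (J / 2 : ℤ),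
            (Φ q (pm + i) - Φt q (pm + i)) * fbar i * Δx := by
          refine Finset.sum_nonneg fun i hi => ?_
          exact mul_nonneg (mul_nonneg
            (sub_nonneg.mpr (ihq _ (hSP pm hpmS i hi))) (hfbar i hi)) hΔx.le
        have hR2 : 0 ≤ lam * Δt * (∑ i ∈ Finset.Icc (-(J / 2 : ℤ)) (J / 2 : ℤ),
            (Φ q (pm + i) - Φt q (pm + i)) * fbar i * Δx) :=
          mul_nonneg (mul_nonneg hlam.le hΔt.le) hSd
        have hmin1 := hpm (pm - 1) hPm
        have hmin2 := hpm (pm + 1) hPp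
        have hT1 : 0 ≤ c pm * Δt *
            ((Φ (q+1) (pm-1) - Φt (q+1) (pm-1)) - (Φ (q+1) pm - Φt (q+1) pm)) :=
          mul_nonneg (mul_nonneg hcnn hΔt.le) (by simpa using sub_nonneg.mpr hmin1)
        have hT2 : 0 ≤ b pm * Δt *
            ((Φ (q+1) (pm+1) - Φt (q+1) (pm+1)) - (Φ (q+1) pm - Φt (q+1) pm)) :=
          mul_nonneg (mul_nonneg hbnn hΔt.le) (by simpa using sub_nonneg.mpr hmin2)
        linarith
      · -- boundary point
        have hmem : pm ∈ P \ S := Finset.mem_sdiff.mpr ⟨hpmP, hpmS⟩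
        rw [hbdry q hqT pm hmem, hbdry' q hqT pm hmem]
        exact sub_nonneg.mpr (ihq pm hpmP)
    have := hpm p hp
    linarith
end

section
/- Assume the mesh conditions k_r·|θ_r − x_p|·Δx ≤ σ_r² for every p ∈ S and every r ∈ 𝓡 (the paper states this as Δx ≤ σ_r²/(k_r θ_r) for all r) and λ·Δt·Î ≤ 1. Then the regime-switching scheme is stable: every solution (Φ^q) satisfies max_{p∈P, r∈𝓡} |Φ^q_{p,r}| ≤ max_{p∈P, r∈𝓡} |Φ^0_{p,r}| for every q = 0,…,T_max. (Paper: stability part of the Lemma on the regime-switching scheme.) -/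
open Finset

/-- Stability of the implicit BTCS scheme for the regime-switching
Lévy-driven OU PIDE: under the mesh conditions `k_r·|θ_r - x_p|·Δx ≤ σ_r²` (for all
interior `p` and all regimes `r`) and `λ·Δt·Î ≤ 1`, every solution of the scheme
satisfies `max_{p,r} |Φ^q_{p,r}| ≤ max_{p,r} |Φ^0_{p,r}|` for every `q = 0, …, Tmax`. -/
theorem stmt_10
    {R : Type*} [Fintype R] [DecidableEq R] [Nonempty R]
    (Δx Δt lam x₀ : ℝ)
    (hΔx : 0 < Δx) (hΔt : 0 < Δt) (hlam : 0 < lam)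
    (k θ σ : R → ℝ) (hk : ∀ r, 0 ≤ k r) (hσ : ∀ r, 0 < σ r)
    (qm : R → R → ℝ) (hqm : ∀ r j, j ≠ r → 0 ≤ qm r j)
    (J N : ℕ) (hJ : Even J)
    (fbar : ℤ → ℝ)
    (hfbar : ∀ i ∈ Finset.Icc (-(J / 2 : ℤ)) (J / 2 : ℤ), 0 ≤ fbar i)
    (Ihat : ℝ) (hIhat : Ihat = ∑ i ∈ Finset.Icc (-(J / 2 : ℤ)) (J / 2 : ℤ), fbar i * Δx)
    (P S : Finset ℤ)
    (hP : P = Finset.Icc 0 ((N : ℤ) - 1))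
    (hS : S ⊆ Finset.Icc 1 ((N : ℤ) - 2))
    (hSP : ∀ p ∈ S, ∀ i ∈ Finset.Icc (-(J / 2 : ℤ)) (J / 2 : ℤ), p + i ∈ P)
    (x : ℤ → ℝ) (hx : ∀ p, x p = x₀ + (p : ℝ) * Δx)
    (c a b : ℤ → R → ℝ)
    (hc : ∀ p r, c p r = (σ r) ^ 2 / (2 * Δx ^ 2) - k r * (θ r - x p) / (2 * Δx))
    (ha : ∀ p r, a p r = (σ r) ^ 2 / Δx ^ 2 + ∑ j ∈ Finset.univ \ {r}, qm r j)
    (hb : ∀ p r, b p r = (σ r) ^ 2 / (2 * Δx ^ 2) + k r * (θ r - x p) / (2 * Δx))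
    (Tmax : ℕ) (Φ : ℕ → ℤ → R → ℝ)
    -- the regime-switching scheme, interior rows
    (hscheme : ∀ q < Tmax, ∀ p ∈ S, ∀ r : R,
      -(c p r) * Δt * Φ (q + 1) (p - 1) r + (1 + a p r * Δt) * Φ (q + 1) p r
          - b p r * Δt * Φ (q + 1) (p + 1) r
          - ∑ j ∈ Finset.univ \ {r}, qm r j * Δt * Φ (q + 1) p j
        = (1 - lam * Δt * Ihat) * Φ q p r
          + lam * Δt *
            ∑ i ∈ Finset.Icc (-(J / 2 : ℤ)) (J / 2 : ℤ), Φ q (p + i) r * fbar i * Δx)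
    -- Dirichlet boundary rows
    (hbdry : ∀ q < Tmax, ∀ p ∈ P \ S, ∀ r : R, Φ (q + 1) p r = Φ q p r)
    -- mesh conditions
    (hmesh1 : ∀ p ∈ S, ∀ r : R, k r * |θ r - x p| * Δx ≤ (σ r) ^ 2)
    (hmesh2 : lam * Δt * Ihat ≤ 1) :
    ∀ q ≤ Tmax, ∀ M : ℝ, (∀ p ∈ P, ∀ r : R, |Φ 0 p r| ≤ M) →
      ∀ p ∈ P, ∀ r : R, |Φ q p r| ≤ M := by
  intro q
  induction q with
  | zero => intro _ M hM0; exact hM0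
  | succ q ih =>
    intro hq M hM0 p hp r
    have hqT : q < Tmax := hq
    have IH : ∀ p ∈ P, ∀ r : R, |Φ q p r| ≤ M := ih (le_of_lt hqT) M hM0
    have hM : 0 ≤ M := le_trans (abs_nonneg _) (hM0 p hp (Classical.arbitrary R))
    obtain ⟨⟨p₀, r₀⟩, hmem, hmax⟩ :=
      Finset.exists_max_image (P ×ˢ Finset.univ) (fun pr => |Φ (q + 1) pr.1 pr.2|)
        ⟨(p, r), Finset.mem_product.mpr ⟨hp, Finset.mem_univ r⟩⟩
    have hp₀P : p₀ ∈ P := (Finset.mem_product.mp hmem).1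
    set M' := |Φ (q + 1) p₀ r₀| with hM'def
    have hmax' : ∀ p' ∈ P, ∀ r' : R, |Φ (q + 1) p' r'| ≤ M' := fun p' hp' r' =>
      hmax (p', r') (Finset.mem_product.mpr ⟨hp', Finset.mem_univ r'⟩)
    have hgoal : |Φ (q + 1) p r| ≤ M' := hmax' p hp r
    have hM'M : M' ≤ M := by
      by_cases hp₀S : p₀ ∈ S
      · -- interior case
        have hIcc := Finset.mem_Icc.mp (hS hp₀S)
        have hpm : p₀ - 1 ∈ P := by rw [hP, Finset.mem_Icc]; omega
        have hpp : p₀ + 1 ∈ P := by rw [hP, Finset.mem_Icc]; omega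
        have h1 : k r₀ * (θ r₀ - x p₀) * Δx ≤ (σ r₀) ^ 2 := by
          refine le_trans ?_ (hmesh1 p₀ hp₀S r₀)
          exact mul_le_mul_of_nonneg_right
            (mul_le_mul_of_nonneg_left (le_abs_self _) (hk r₀)) hΔx.le
        have h2 : -(k r₀ * (θ r₀ - x p₀) * Δx) ≤ (σ r₀) ^ 2 := by
          refine le_trans ?_ (hmesh1 p₀ hp₀S r₀)
          have : -(k r₀ * (θ r₀ - x p₀)) ≤ k r₀ * |θ r₀ - x p₀| := by
            rw [← mul_neg]
            exact mul_le_mul_of_nonneg_left (neg_le_abs _) (hk r₀)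
          nlinarith
        have hc0 : 0 ≤ c p₀ r₀ := by
          rw [hc, sub_nonneg, div_le_div_iff₀ (by positivity) (by positivity)]
          nlinarith
        have hb0 : 0 ≤ b p₀ r₀ := by
          rw [hb]
          have : -(k r₀ * (θ r₀ - x p₀)) / (2 * Δx) ≤ (σ r₀) ^ 2 / (2 * Δx ^ 2) := by
            rw [div_le_div_iff₀ (by positivity) (by positivity)]
            nlinarith
          have h3 : -((σ r₀) ^ 2 / (2 * Δx ^ 2)) ≤ k r₀ * (θ r₀ - x p₀) / (2 * Δx) := by
            rw [neg_le, ← neg_div]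
            exact this
          linarith
        have hQ0 : 0 ≤ ∑ j ∈ Finset.univ \ {r₀}, qm r₀ j :=
          Finset.sum_nonneg fun j hj => hqm r₀ j (by
            simpa using (Finset.mem_sdiff.mp hj).2)
        set Q := ∑ j ∈ Finset.univ \ {r₀}, qm r₀ j with hQdef
        have hIhat0 : 0 ≤ Ihat := by
          rw [hIhat]
          exact Finset.sum_nonneg fun i hi => mul_nonneg (hfbar i hi) hΔx.le
        -- bound the jump sum
        have hjump : |∑ i ∈ Finset.Icc (-(J / 2 : ℤ)) (J / 2 : ℤ),
            Φ q (p₀ + i) r₀ * fbar i * Δx| ≤ M * Ihat := by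
          calc |∑ i ∈ Finset.Icc (-(J / 2 : ℤ)) (J / 2 : ℤ), Φ q (p₀ + i) r₀ * fbar i * Δx|
              ≤ ∑ i ∈ Finset.Icc (-(J / 2 : ℤ)) (J / 2 : ℤ), |Φ q (p₀ + i) r₀ * fbar i * Δx| :=
                Finset.abs_sum_le_sum_abs _ _
            _ ≤ ∑ i ∈ Finset.Icc (-(J / 2 : ℤ)) (J / 2 : ℤ), M * (fbar i * Δx) := by
                refine Finset.sum_le_sum fun i hi => ?_
                rw [abs_mul, abs_mul, abs_of_nonneg (hfbar i hi), abs_of_nonneg hΔx.le,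
                  mul_assoc]
                exact mul_le_mul_of_nonneg_right (IH _ (hSP p₀ hp₀S i hi) r₀)
                  (mul_nonneg (hfbar i hi) hΔx.le)
            _ = M * Ihat := by rw [← Finset.mul_sum, hIhat]
        -- bound the RHS
        have hrhs : |(1 - lam * Δt * Ihat) * Φ q p₀ r₀
            + lam * Δt * ∑ i ∈ Finset.Icc (-(J / 2 : ℤ)) (J / 2 : ℤ),
                Φ q (p₀ + i) r₀ * fbar i * Δx| ≤ M := by
          have h4 : 0 ≤ 1 - lam * Δt * Ihat := by linarith
          calc _ ≤ |(1 - lam * Δt * Ihat) * Φ q p₀ r₀|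
                + |lam * Δt * ∑ i ∈ Finset.Icc (-(J / 2 : ℤ)) (J / 2 : ℤ),
                    Φ q (p₀ + i) r₀ * fbar i * Δx| := abs_add_le _ _
            _ ≤ (1 - lam * Δt * Ihat) * M + lam * Δt * (M * Ihat) := by
                rw [abs_mul, abs_mul, abs_of_nonneg h4,
                  abs_of_nonneg (by positivity : (0:ℝ) ≤ lam * Δt)]
                exact add_le_add
                  (mul_le_mul_of_nonneg_left (IH p₀ hp₀P r₀) h4)
                  (mul_le_mul_of_nonneg_left hjump (by positivity))
            _ = M := by ring
        -- switching sum bound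
        have hswitch : |∑ j ∈ Finset.univ \ {r₀}, qm r₀ j * Δt * Φ (q + 1) p₀ j|
            ≤ Q * Δt * M' := by
          calc |∑ j ∈ Finset.univ \ {r₀}, qm r₀ j * Δt * Φ (q + 1) p₀ j|
              ≤ ∑ j ∈ Finset.univ \ {r₀}, |qm r₀ j * Δt * Φ (q + 1) p₀ j| :=
                Finset.abs_sum_le_sum_abs _ _
            _ ≤ ∑ j ∈ Finset.univ \ {r₀}, qm r₀ j * Δt * M' := by
                refine Finset.sum_le_sum fun j hj => ?_
                have hqj : 0 ≤ qm r₀ j := hqm r₀ j (by simpa using (Finset.mem_sdiff.mp hj).2)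
                rw [abs_mul, abs_mul, abs_of_nonneg hqj, abs_of_nonneg hΔt.le]
                exact mul_le_mul_of_nonneg_left (hmax' p₀ hp₀P j)
                  (by positivity)
            _ = Q * Δt * M' := by rw [hQdef, Finset.sum_mul, Finset.sum_mul]
        -- the rearranged scheme equation
        have heq : (1 + a p₀ r₀ * Δt) * Φ (q + 1) p₀ r₀
            = c p₀ r₀ * Δt * Φ (q + 1) (p₀ - 1) r₀
              + b p₀ r₀ * Δt * Φ (q + 1) (p₀ + 1) r₀
              + (∑ j ∈ Finset.univ \ {r₀}, qm r₀ j * Δt * Φ (q + 1) p₀ j)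
              + ((1 - lam * Δt * Ihat) * Φ q p₀ r₀
                + lam * Δt * ∑ i ∈ Finset.Icc (-(J / 2 : ℤ)) (J / 2 : ℤ),
                    Φ q (p₀ + i) r₀ * fbar i * Δx) := by
          have := hscheme q hqT p₀ hp₀S r₀
          linarith
        have ha0 : 0 ≤ a p₀ r₀ * Δt := by
          rw [ha]; exact mul_nonneg (add_nonneg (by positivity) hQ0) hΔt.le
        have hlhs : (1 + a p₀ r₀ * Δt) * M' = |(1 + a p₀ r₀ * Δt) * Φ (q + 1) p₀ r₀| := by
          rw [abs_mul, abs_of_nonneg (by linarith : (0:ℝ) ≤ 1 + a p₀ r₀ * Δt)]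
        have hkey : (1 + a p₀ r₀ * Δt) * M'
            ≤ c p₀ r₀ * Δt * M' + b p₀ r₀ * Δt * M' + Q * Δt * M' + M := by
          rw [hlhs, heq]
          have t1 : |c p₀ r₀ * Δt * Φ (q + 1) (p₀ - 1) r₀| ≤ c p₀ r₀ * Δt * M' := by
            rw [abs_mul, abs_mul, abs_of_nonneg hc0, abs_of_nonneg hΔt.le]
            exact mul_le_mul_of_nonneg_left (hmax' _ hpm r₀) (by positivity)
          have t2 : |b p₀ r₀ * Δt * Φ (q + 1) (p₀ + 1) r₀| ≤ b p₀ r₀ * Δt * M' := by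
            rw [abs_mul, abs_mul, abs_of_nonneg hb0, abs_of_nonneg hΔt.le]
            exact mul_le_mul_of_nonneg_left (hmax' _ hpp r₀) (by positivity)
          calc |_ + _ + _ + _| ≤ |_| + |_| + |_| + |_| := by
                exact le_trans (abs_add_le _ _) (add_le_add (le_trans (abs_add_le _ _)
                  (add_le_add (abs_add_le _ _) le_rfl)) le_rfl)
            _ ≤ c p₀ r₀ * Δt * M' + b p₀ r₀ * Δt * M' + Q * Δt * M' + M :=
                add_le_add (add_le_add (add_le_add t1 t2) hswitch) hrhs
        have hcb : c p₀ r₀ + b p₀ r₀ = (σ r₀) ^ 2 / Δx ^ 2 := by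
          rw [hc, hb]; field_simp; ring
        have haeq : a p₀ r₀ = c p₀ r₀ + b p₀ r₀ + Q := by
          rw [ha p₀ r₀, ← hcb]
        have hmul : a p₀ r₀ * (Δt * M') = (c p₀ r₀ + b p₀ r₀ + Q) * (Δt * M') := by
          rw [haeq]
        linarith [hkey, hmul]
      · -- boundary case
        rw [hM'def, hbdry q hqT p₀ (Finset.mem_sdiff.mpr ⟨hp₀P, hp₀S⟩) r₀]
        exact IH p₀ hp₀P r₀
    exact le_trans hgoal hM'M
end

section
/- Assume λ·Δt·Î ≤ 1. Then, with no condition on the spatial mesh sizes Δx and Δy (the paper calls the scheme 'unconditionally' stable), the upwinded stochastic-volatility scheme is stable: every solution (Φ^q) satisfies max_{p∈P, 0≤j≤V−1} |Φ^q_{p,j}| ≤ max_{p∈P, 0≤j≤V−1} |Φ^0_{p,j}| for every q = 0,…,T_max. (Paper: stability part of the Lemma on the stochastic volatility scheme; note all spatial coefficients are nonnegative by construction of the upwind discretization.) -/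
open Finset

set_option maxHeartbeats 1600000

/-- Unconditional stability of the upwinded implicit scheme for the
stochastic-volatility Lévy-driven OU PIDE: assuming only `λ·Δt·Î ≤ 1` (no condition on
the spatial mesh sizes `Δx`, `Δy`), every solution of the scheme satisfies
`max_{p,j} |Φ^q_{p,j}| ≤ max_{p,j} |Φ^0_{p,j}|` for every `q = 0, …, Tmax`. -/
theorem stmt_12
    (Δx Δy Δt k θ κ μ ξ lam x₀ : ℝ)
    (hΔx : 0 < Δx) (hΔy : 0 < Δy) (hΔt : 0 < Δt) (hξ : 0 < ξ) (hlam : 0 < lam)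
    (J N V : ℕ) (hJ : Even J) (hV : 2 ≤ V)
    (fbar : ℤ → ℝ)
    (hfbar : ∀ i ∈ Finset.Icc (-(J / 2 : ℤ)) (J / 2 : ℤ), 0 ≤ fbar i)
    (Ihat : ℝ) (hIhat : Ihat = ∑ i ∈ Finset.Icc (-(J / 2 : ℤ)) (J / 2 : ℤ), fbar i * Δx)
    (P S : Finset ℤ)
    (hP : P = Finset.Icc 0 ((N : ℤ) - 1))
    (hS : S ⊆ Finset.Icc 1 ((N : ℤ) - 2))
    (hSP : ∀ p ∈ S, ∀ i ∈ Finset.Icc (-(J / 2 : ℤ)) (J / 2 : ℤ), p + i ∈ P)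
    (x : ℤ → ℝ) (hx : ∀ p, x p = x₀ + (p : ℝ) * Δx)
    (y : ℤ → ℝ) (hy : ∀ j, y j = (j : ℝ) * Δy)
    (Vset : Finset ℤ) (hV' : Vset = Finset.Icc 0 ((V : ℤ) - 1))
    (c a b e f : ℤ → ℤ → ℝ)
    (hc : ∀ p j, c p j = y j / (2 * Δx ^ 2)
        - (if k * (θ - x p) < 0 then k * (θ - x p) / Δx else 0))
    (ha : ∀ p j, a p j = y j / Δx ^ 2 + ξ ^ 2 * y j / Δy ^ 2
        + |k * (θ - x p)| / Δx + |κ * (μ - y j)| / Δy)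
    (hb : ∀ p j, b p j = y j / (2 * Δx ^ 2)
        + (if 0 < k * (θ - x p) then k * (θ - x p) / Δx else 0))
    (he : ∀ p j, e p j = (if j ≠ (V : ℤ) - 1 then ξ ^ 2 * y j / (2 * Δy ^ 2) else 0)
        + (if j = (V : ℤ) - 1 then ξ ^ 2 * y j / Δy ^ 2 else 0)
        - (if κ * (μ - y j) < 0 ∧ 0 < j ∧ j < (V : ℤ) - 1
            then κ * (μ - y j) / Δy else 0))
    (hf : ∀ p j, f p j = (if j ≠ (V : ℤ) - 1 then ξ ^ 2 * y j / (2 * Δy ^ 2) else 0)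
        + (if 0 < κ * (μ - y j) ∧ j ≠ (V : ℤ) - 1 then κ * (μ - y j) / Δy else 0))
    (Tmax : ℕ) (Φ : ℕ → ℤ → ℤ → ℝ)
    -- the stochastic-volatility scheme, interior rows
    (hscheme : ∀ q < Tmax, ∀ p ∈ S, ∀ j ∈ Vset,
      -(c p j) * Δt * Φ (q + 1) (p - 1) j + (1 + a p j * Δt) * Φ (q + 1) p j
          - b p j * Δt * Φ (q + 1) (p + 1) j
          - e p j * Δt * Φ (q + 1) p (j - 1)
          - f p j * Δt * Φ (q + 1) p (j + 1)
        = (1 - lam * Δt * Ihat) * Φ q p j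
          + lam * Δt *
            ∑ i ∈ Finset.Icc (-(J / 2 : ℤ)) (J / 2 : ℤ), Φ q (p + i) j * fbar i * Δx)
    -- Dirichlet boundary rows
    (hbdry : ∀ q < Tmax, ∀ p ∈ P \ S, ∀ j ∈ Vset, Φ (q + 1) p j = Φ q p j)
    -- temporal mesh condition (no condition on Δx, Δy)
    (hmesh : lam * Δt * Ihat ≤ 1) :
    ∀ q ≤ Tmax, ∀ M : ℝ, (∀ p ∈ P, ∀ j ∈ Vset, |Φ 0 p j| ≤ M) →
      ∀ p ∈ P, ∀ j ∈ Vset, |Φ q p j| ≤ M := by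

  intro q
  induction q with
  | zero => intro _ M hM; exact hM
  | succ q ih =>
    intro hq M hM
    have hq' : q < Tmax := hq
    have ihq := ih (Nat.le_of_lt hq') M hM
    intro p hp j hj
    have hM0 : 0 ≤ M := le_trans (abs_nonneg _) (hM p hp j hj)
    have hIhat0 : 0 ≤ Ihat := by
      rw [hIhat]
      exact Finset.sum_nonneg fun i hi => mul_nonneg (hfbar i hi) hΔx.le
    have hPne : (P ×ˢ Vset).Nonempty := ⟨(p, j), Finset.mem_product.2 ⟨hp, hj⟩⟩
    set W := (P ×ˢ Vset).sup' hPne (fun z => |Φ (q+1) z.1 z.2|) with hWdef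
    have hWnn : ∀ p' ∈ P, ∀ j' ∈ Vset, |Φ (q+1) p' j'| ≤ W := by
      intro p' hp' j' hj'
      have hmem : (p', j') ∈ P ×ˢ Vset := Finset.mem_product.2 ⟨hp', hj'⟩
      exact Finset.le_sup' (fun z : ℤ × ℤ => |Φ (q+1) z.1 z.2|) hmem
    have hle : |Φ (q+1) p j| ≤ W := hWnn p hp j hj
    have hWM : W ≤ M := by
      obtain ⟨z, hz, hzW⟩ := Finset.exists_mem_eq_sup' hPne (fun z => |Φ (q+1) z.1 z.2|)
      obtain ⟨hzP, hzV⟩ := Finset.mem_product.1 hz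
      rw [← hWdef] at hzW
      set p₀ := z.1
      set j₀ := z.2
      have hW0 : 0 ≤ W := by rw [hzW]; exact abs_nonneg _
      by_cases hpS : p₀ ∈ S
      · -- interior point: use the scheme
        have hj0 : (0:ℤ) ≤ j₀ ∧ j₀ ≤ (V:ℤ) - 1 := by
          rw [hV'] at hzV; exact Finset.mem_Icc.1 hzV
        have hy0 : 0 ≤ y j₀ := by
          rw [hy]; exact mul_nonneg (by exact_mod_cast hj0.1) hΔy.le
        have hA0 : 0 ≤ ξ ^ 2 * y j₀ := mul_nonneg (sq_nonneg _) hy0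
        -- nonnegativity of coefficients
        have hc0 : 0 ≤ c p₀ j₀ := by
          rw [hc]
          have h1 : 0 ≤ y j₀ / (2 * Δx ^ 2) := div_nonneg hy0 (by positivity)
          split_ifs with h
          · have := div_nonpos_of_nonpos_of_nonneg h.le hΔx.le; linarith
          · linarith
        have hb0 : 0 ≤ b p₀ j₀ := by
          rw [hb]
          have h1 : 0 ≤ y j₀ / (2 * Δx ^ 2) := div_nonneg hy0 (by positivity)
          split_ifs with h
          · have := div_nonneg h.le hΔx.le; linarith
          · linarith
        have he0 : 0 ≤ e p₀ j₀ := by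
          rw [he]
          have h1 : 0 ≤ ξ ^ 2 * y j₀ / (2 * Δy ^ 2) := div_nonneg hA0 (by positivity)
          have h2 : 0 ≤ ξ ^ 2 * y j₀ / Δy ^ 2 := div_nonneg hA0 (by positivity)
          have ht1 : 0 ≤ (if j₀ ≠ (V:ℤ) - 1 then ξ ^ 2 * y j₀ / (2 * Δy ^ 2) else 0) := by
            split_ifs <;> [exact h1; exact le_rfl]
          have ht2 : 0 ≤ (if j₀ = (V:ℤ) - 1 then ξ ^ 2 * y j₀ / Δy ^ 2 else 0) := by
            split_ifs <;> [exact h2; exact le_rfl]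
          have ht3 : (if κ * (μ - y j₀) < 0 ∧ 0 < j₀ ∧ j₀ < (V:ℤ) - 1
              then κ * (μ - y j₀) / Δy else 0) ≤ 0 := by
            split_ifs with g
            · exact div_nonpos_of_nonpos_of_nonneg g.1.le hΔy.le
            · exact le_rfl
          linarith
        have hf0 : 0 ≤ f p₀ j₀ := by
          rw [hf]
          have h1 : 0 ≤ ξ ^ 2 * y j₀ / (2 * Δy ^ 2) := div_nonneg hA0 (by positivity)
          have ht1 : 0 ≤ (if j₀ ≠ (V:ℤ) - 1 then ξ ^ 2 * y j₀ / (2 * Δy ^ 2) else 0) := by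
            split_ifs <;> [exact h1; exact le_rfl]
          have ht2 : 0 ≤ (if 0 < κ * (μ - y j₀) ∧ j₀ ≠ (V:ℤ) - 1
              then κ * (μ - y j₀) / Δy else 0) := by
            split_ifs with g
            · exact div_nonneg g.1.le hΔy.le
            · exact le_rfl
          linarith
        have ha0 : 0 ≤ a p₀ j₀ := by
          rw [ha]
          have h1 : 0 ≤ y j₀ / Δx ^ 2 := div_nonneg hy0 (by positivity)
          have h2 : 0 ≤ ξ ^ 2 * y j₀ / Δy ^ 2 := div_nonneg hA0 (by positivity)
          have h3 : 0 ≤ |k * (θ - x p₀)| / Δx := div_nonneg (abs_nonneg _) hΔx.le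
          have h4 : 0 ≤ |κ * (μ - y j₀)| / Δy := div_nonneg (abs_nonneg _) hΔy.le
          linarith
        -- sum of coefficients bounded by a
        have hsumc : c p₀ j₀ + b p₀ j₀ + e p₀ j₀ + f p₀ j₀ ≤ a p₀ j₀ := by
          rw [hc, hb, he, hf, ha]
          have hK : (if 0 < k * (θ - x p₀) then k * (θ - x p₀) / Δx else 0)
              - (if k * (θ - x p₀) < 0 then k * (θ - x p₀) / Δx else 0)
              ≤ |k * (θ - x p₀)| / Δx := by
            have habs0 : 0 ≤ |k * (θ - x p₀)| / Δx := div_nonneg (abs_nonneg _) hΔx.le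
            split_ifs with g1 g2 g2
            · exact absurd (g1.trans g2) (lt_irrefl _)
            · rw [abs_of_pos g1]; linarith
            · rw [abs_of_neg g2, neg_div]; linarith
            · linarith
          have hB : (if 0 < κ * (μ - y j₀) ∧ j₀ ≠ (V:ℤ) - 1 then κ * (μ - y j₀) / Δy else 0)
              - (if κ * (μ - y j₀) < 0 ∧ 0 < j₀ ∧ j₀ < (V:ℤ) - 1
                  then κ * (μ - y j₀) / Δy else 0)
              ≤ |κ * (μ - y j₀)| / Δy := by
            have habs : 0 ≤ |κ * (μ - y j₀)| / Δy := div_nonneg (abs_nonneg _) hΔy.le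
            split_ifs with g1 g2 g2
            · exact absurd (g1.1.trans g2.1) (lt_irrefl _)
            · rw [abs_of_pos g1.1]; linarith
            · rw [abs_of_neg g2.1, neg_div]; linarith
            · linarith
          have hXi : (if j₀ ≠ (V:ℤ) - 1 then ξ ^ 2 * y j₀ / (2 * Δy ^ 2) else 0)
              + (if j₀ = (V:ℤ) - 1 then ξ ^ 2 * y j₀ / Δy ^ 2 else 0)
              + (if j₀ ≠ (V:ℤ) - 1 then ξ ^ 2 * y j₀ / (2 * Δy ^ 2) else 0)
              = ξ ^ 2 * y j₀ / Δy ^ 2 := by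
            by_cases hje : j₀ = (V:ℤ) - 1
            · simp [hje]
            · simp only [hje, if_neg, if_pos, ne_eq, not_false_eq_true, if_true, if_false]
              ring
          have hyy : y j₀ / (2 * Δx ^ 2) + y j₀ / (2 * Δx ^ 2) = y j₀ / Δx ^ 2 := by ring
          linarith
        -- the scheme equation, rearranged
        have key := hscheme q hq' p₀ hpS j₀ hzV
        have key' : (1 + a p₀ j₀ * Δt) * Φ (q+1) p₀ j₀
            = (1 - lam * Δt * Ihat) * Φ q p₀ j₀
              + lam * Δt * ∑ i ∈ Finset.Icc (-(J / 2 : ℤ)) (J / 2 : ℤ),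
                  Φ q (p₀ + i) j₀ * fbar i * Δx
              + c p₀ j₀ * Δt * Φ (q+1) (p₀-1) j₀
              + b p₀ j₀ * Δt * Φ (q+1) (p₀+1) j₀
              + e p₀ j₀ * Δt * Φ (q+1) p₀ (j₀-1)
              + f p₀ j₀ * Δt * Φ (q+1) p₀ (j₀+1) := by linarith
        -- neighbor bounds
        have hpIcc := Finset.mem_Icc.1 (hS hpS)
        have hpm : p₀ - 1 ∈ P := by rw [hP]; rw [Finset.mem_Icc]; omega
        have hpp : p₀ + 1 ∈ P := by rw [hP]; rw [Finset.mem_Icc]; omega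
        have hp₀P : p₀ ∈ P := by rw [hP]; rw [Finset.mem_Icc]; omega
        have hn1 : |Φ (q+1) (p₀-1) j₀| ≤ W := hWnn _ hpm _ hzV
        have hn2 : |Φ (q+1) (p₀+1) j₀| ≤ W := hWnn _ hpp _ hzV
        have hn3 : e p₀ j₀ * |Φ (q+1) p₀ (j₀-1)| ≤ e p₀ j₀ * W := by
          by_cases hjz : j₀ = 0
          · have hez : e p₀ j₀ = 0 := by
              rw [he, hjz]
              have h1 : (0:ℤ) ≠ (V:ℤ) - 1 := by omega
              have hy00 : y 0 = 0 := by rw [hy]; simp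
              simp [h1, hy00]
            rw [hez]; simp
          · have : j₀ - 1 ∈ Vset := by rw [hV']; rw [Finset.mem_Icc]; omega
            exact mul_le_mul_of_nonneg_left (hWnn _ hp₀P _ this) he0
        have hn4 : f p₀ j₀ * |Φ (q+1) p₀ (j₀+1)| ≤ f p₀ j₀ * W := by
          by_cases hjv : j₀ = (V:ℤ) - 1
          · have hfz : f p₀ j₀ = 0 := by rw [hf, hjv]; simp
            rw [hfz]; simp
          · have : j₀ + 1 ∈ Vset := by rw [hV']; rw [Finset.mem_Icc]; omega
            exact mul_le_mul_of_nonneg_left (hWnn _ hp₀P _ this) hf0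
        -- bound on the jump sum
        have hJsum : |∑ i ∈ Finset.Icc (-(J / 2 : ℤ)) (J / 2 : ℤ),
            Φ q (p₀ + i) j₀ * fbar i * Δx| ≤ M * Ihat := by
          rw [hIhat, Finset.mul_sum]
          refine (Finset.abs_sum_le_sum_abs _ _).trans (Finset.sum_le_sum ?_)
          intro i hi
          rw [abs_mul, abs_mul, abs_of_nonneg (hfbar i hi), abs_of_nonneg hΔx.le]
          have hv : |Φ q (p₀ + i) j₀| ≤ M := ihq _ (hSP p₀ hpS i hi) j₀ hzV
          have hfx : 0 ≤ fbar i * Δx := mul_nonneg (hfbar i hi) hΔx.le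
          calc |Φ q (p₀ + i) j₀| * fbar i * Δx
              = |Φ q (p₀ + i) j₀| * (fbar i * Δx) := by ring
            _ ≤ M * (fbar i * Δx) := mul_le_mul_of_nonneg_right hv hfx
        -- bound on the explicit term
        have hExp : |(1 - lam * Δt * Ihat) * Φ q p₀ j₀| ≤ (1 - lam * Δt * Ihat) * M := by
          rw [abs_mul, abs_of_nonneg (by linarith : (0:ℝ) ≤ 1 - lam * Δt * Ihat)]
          exact mul_le_mul_of_nonneg_left (ihq _ hp₀P _ hzV) (by linarith)
        -- put everything together
        have hmain : (1 + a p₀ j₀ * Δt) * W ≤ M + a p₀ j₀ * Δt * W := by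
          have h1 : (1 + a p₀ j₀ * Δt) * W = |(1 + a p₀ j₀ * Δt) * Φ (q+1) p₀ j₀| := by
            rw [abs_mul, abs_of_nonneg (by nlinarith : (0:ℝ) ≤ 1 + a p₀ j₀ * Δt), hzW]
          rw [h1, key']
          have t1 := abs_add_le
            ((1 - lam * Δt * Ihat) * Φ q p₀ j₀
              + lam * Δt * ∑ i ∈ Finset.Icc (-(J / 2 : ℤ)) (J / 2 : ℤ),
                  Φ q (p₀ + i) j₀ * fbar i * Δx
              + c p₀ j₀ * Δt * Φ (q+1) (p₀-1) j₀
              + b p₀ j₀ * Δt * Φ (q+1) (p₀+1) j₀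
              + e p₀ j₀ * Δt * Φ (q+1) p₀ (j₀-1))
            (f p₀ j₀ * Δt * Φ (q+1) p₀ (j₀+1))
          have t2 := abs_add_le
            ((1 - lam * Δt * Ihat) * Φ q p₀ j₀
              + lam * Δt * ∑ i ∈ Finset.Icc (-(J / 2 : ℤ)) (J / 2 : ℤ),
                  Φ q (p₀ + i) j₀ * fbar i * Δx
              + c p₀ j₀ * Δt * Φ (q+1) (p₀-1) j₀
              + b p₀ j₀ * Δt * Φ (q+1) (p₀+1) j₀)
            (e p₀ j₀ * Δt * Φ (q+1) p₀ (j₀-1))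
          have t3 := abs_add_le
            ((1 - lam * Δt * Ihat) * Φ q p₀ j₀
              + lam * Δt * ∑ i ∈ Finset.Icc (-(J / 2 : ℤ)) (J / 2 : ℤ),
                  Φ q (p₀ + i) j₀ * fbar i * Δx
              + c p₀ j₀ * Δt * Φ (q+1) (p₀-1) j₀)
            (b p₀ j₀ * Δt * Φ (q+1) (p₀+1) j₀)
          have t4 := abs_add_le
            ((1 - lam * Δt * Ihat) * Φ q p₀ j₀
              + lam * Δt * ∑ i ∈ Finset.Icc (-(J / 2 : ℤ)) (J / 2 : ℤ),
                  Φ q (p₀ + i) j₀ * fbar i * Δx)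
            (c p₀ j₀ * Δt * Φ (q+1) (p₀-1) j₀)
          have t5 := abs_add_le
            ((1 - lam * Δt * Ihat) * Φ q p₀ j₀)
            (lam * Δt * ∑ i ∈ Finset.Icc (-(J / 2 : ℤ)) (J / 2 : ℤ),
                  Φ q (p₀ + i) j₀ * fbar i * Δx)
          have u2 : |lam * Δt * ∑ i ∈ Finset.Icc (-(J / 2 : ℤ)) (J / 2 : ℤ),
              Φ q (p₀ + i) j₀ * fbar i * Δx| ≤ lam * Δt * (M * Ihat) := by
            rw [abs_mul, abs_of_nonneg (by positivity : (0:ℝ) ≤ lam * Δt)]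
            exact mul_le_mul_of_nonneg_left hJsum (by positivity)
          have u3 : |c p₀ j₀ * Δt * Φ (q+1) (p₀-1) j₀| ≤ c p₀ j₀ * Δt * W := by
            rw [abs_mul, abs_of_nonneg (mul_nonneg hc0 hΔt.le)]
            exact mul_le_mul_of_nonneg_left hn1 (mul_nonneg hc0 hΔt.le)
          have u4 : |b p₀ j₀ * Δt * Φ (q+1) (p₀+1) j₀| ≤ b p₀ j₀ * Δt * W := by
            rw [abs_mul, abs_of_nonneg (mul_nonneg hb0 hΔt.le)]
            exact mul_le_mul_of_nonneg_left hn2 (mul_nonneg hb0 hΔt.le)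
          have u5 : |e p₀ j₀ * Δt * Φ (q+1) p₀ (j₀-1)| ≤ e p₀ j₀ * Δt * W := by
            rw [abs_mul, abs_of_nonneg (mul_nonneg he0 hΔt.le)]
            calc e p₀ j₀ * Δt * |Φ (q+1) p₀ (j₀-1)|
                = (e p₀ j₀ * |Φ (q+1) p₀ (j₀-1)|) * Δt := by ring
              _ ≤ (e p₀ j₀ * W) * Δt := mul_le_mul_of_nonneg_right hn3 hΔt.le
              _ = e p₀ j₀ * Δt * W := by ring
          have u6 : |f p₀ j₀ * Δt * Φ (q+1) p₀ (j₀+1)| ≤ f p₀ j₀ * Δt * W := by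
            rw [abs_mul, abs_of_nonneg (mul_nonneg hf0 hΔt.le)]
            calc f p₀ j₀ * Δt * |Φ (q+1) p₀ (j₀+1)|
                = (f p₀ j₀ * |Φ (q+1) p₀ (j₀+1)|) * Δt := by ring
              _ ≤ (f p₀ j₀ * W) * Δt := mul_le_mul_of_nonneg_right hn4 hΔt.le
              _ = f p₀ j₀ * Δt * W := by ring
          have hsum2 : (c p₀ j₀ + b p₀ j₀ + e p₀ j₀ + f p₀ j₀) * Δt * W
              ≤ a p₀ j₀ * Δt * W := by
            apply mul_le_mul_of_nonneg_right _ hW0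
            exact mul_le_mul_of_nonneg_right hsumc hΔt.le
          linarith [hExp, u2, u3, u4, u5, u6, t1, t2, t3, t4, t5, hsum2]
        linarith [hmain]
      · -- boundary point
        have hzPS : p₀ ∈ P \ S := Finset.mem_sdiff.2 ⟨hzP, hpS⟩
        rw [hzW, hbdry q hq' p₀ hzPS j₀ hzV]
        exact ihq _ hzP _ hzV
    exact hle.trans hWM
end

section
/- Assume λ·Δt·Î ≤ 1. Then, with no condition on the spatial mesh sizes Δx and Δy (the paper calls the scheme 'unconditionally' monotone), the upwinded stochastic-volatility scheme satisfies the discrete comparison principle: if (Φ^q) and (Φ̃^q) are two solutions with Φ^0_{p,j} ≥ Φ̃^0_{p,j} for all p ∈ P and 0 ≤ j ≤ V−1, then Φ^q_{p,j} ≥ Φ̃^q_{p,j} for all p ∈ P, 0 ≤ j ≤ V−1 and all q = 0,…,T_max. (Paper: monotonicity part of the Lemma on the stochastic volatility scheme.) -/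
open Finset

set_option maxHeartbeats 1000000 in
/-- Unconditional monotonicity (discrete comparison principle) of the
upwinded implicit scheme for the stochastic-volatility Lévy-driven OU PIDE: assuming only
`λ·Δt·Î ≤ 1` (no condition on the spatial mesh sizes `Δx`, `Δy`), if two solutions
satisfy `Φ^0 ≥ Φ̃^0` then `Φ^q ≥ Φ̃^q` for all `q = 0, …, Tmax`. -/
theorem stmt_13
    (Δx Δy Δt k θ κ μ ξ lam x₀ : ℝ)
    (hΔx : 0 < Δx) (hΔy : 0 < Δy) (hΔt : 0 < Δt) (hξ : 0 < ξ) (hlam : 0 < lam)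
    (J N V : ℕ) (hJ : Even J) (hV : 2 ≤ V)
    (fbar : ℤ → ℝ)
    (hfbar : ∀ i ∈ Finset.Icc (-(J / 2 : ℤ)) (J / 2 : ℤ), 0 ≤ fbar i)
    (Ihat : ℝ) (hIhat : Ihat = ∑ i ∈ Finset.Icc (-(J / 2 : ℤ)) (J / 2 : ℤ), fbar i * Δx)
    (P S : Finset ℤ)
    (hP : P = Finset.Icc 0 ((N : ℤ) - 1))
    (hS : S ⊆ Finset.Icc 1 ((N : ℤ) - 2))
    (hSP : ∀ p ∈ S, ∀ i ∈ Finset.Icc (-(J / 2 : ℤ)) (J / 2 : ℤ), p + i ∈ P)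
    (x : ℤ → ℝ) (hx : ∀ p, x p = x₀ + (p : ℝ) * Δx)
    (y : ℤ → ℝ) (hy : ∀ j, y j = (j : ℝ) * Δy)
    (Vset : Finset ℤ) (hV' : Vset = Finset.Icc 0 ((V : ℤ) - 1))
    (c a b e f : ℤ → ℤ → ℝ)
    (hc : ∀ p j, c p j = y j / (2 * Δx ^ 2)
        - (if k * (θ - x p) < 0 then k * (θ - x p) / Δx else 0))
    (ha : ∀ p j, a p j = y j / Δx ^ 2 + ξ ^ 2 * y j / Δy ^ 2
        + |k * (θ - x p)| / Δx + |κ * (μ - y j)| / Δy)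
    (hb : ∀ p j, b p j = y j / (2 * Δx ^ 2)
        + (if 0 < k * (θ - x p) then k * (θ - x p) / Δx else 0))
    (he : ∀ p j, e p j = (if j ≠ (V : ℤ) - 1 then ξ ^ 2 * y j / (2 * Δy ^ 2) else 0)
        + (if j = (V : ℤ) - 1 then ξ ^ 2 * y j / Δy ^ 2 else 0)
        - (if κ * (μ - y j) < 0 ∧ 0 < j ∧ j < (V : ℤ) - 1
            then κ * (μ - y j) / Δy else 0))
    (hf : ∀ p j, f p j = (if j ≠ (V : ℤ) - 1 then ξ ^ 2 * y j / (2 * Δy ^ 2) else 0)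
        + (if 0 < κ * (μ - y j) ∧ j ≠ (V : ℤ) - 1 then κ * (μ - y j) / Δy else 0))
    (Tmax : ℕ) (Φ Φt : ℕ → ℤ → ℤ → ℝ)
    -- the stochastic-volatility scheme for Φ, interior rows
    (hscheme : ∀ q < Tmax, ∀ p ∈ S, ∀ j ∈ Vset,
      -(c p j) * Δt * Φ (q + 1) (p - 1) j + (1 + a p j * Δt) * Φ (q + 1) p j
          - b p j * Δt * Φ (q + 1) (p + 1) j
          - e p j * Δt * Φ (q + 1) p (j - 1)
          - f p j * Δt * Φ (q + 1) p (j + 1)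
        = (1 - lam * Δt * Ihat) * Φ q p j
          + lam * Δt *
            ∑ i ∈ Finset.Icc (-(J / 2 : ℤ)) (J / 2 : ℤ), Φ q (p + i) j * fbar i * Δx)
    (hbdry : ∀ q < Tmax, ∀ p ∈ P \ S, ∀ j ∈ Vset, Φ (q + 1) p j = Φ q p j)
    -- the stochastic-volatility scheme for Φ̃, interior rows
    (hscheme' : ∀ q < Tmax, ∀ p ∈ S, ∀ j ∈ Vset,
      -(c p j) * Δt * Φt (q + 1) (p - 1) j + (1 + a p j * Δt) * Φt (q + 1) p j
          - b p j * Δt * Φt (q + 1) (p + 1) j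
          - e p j * Δt * Φt (q + 1) p (j - 1)
          - f p j * Δt * Φt (q + 1) p (j + 1)
        = (1 - lam * Δt * Ihat) * Φt q p j
          + lam * Δt *
            ∑ i ∈ Finset.Icc (-(J / 2 : ℤ)) (J / 2 : ℤ), Φt q (p + i) j * fbar i * Δx)
    (hbdry' : ∀ q < Tmax, ∀ p ∈ P \ S, ∀ j ∈ Vset, Φt (q + 1) p j = Φt q p j)
    -- temporal mesh condition (no condition on Δx, Δy)
    (hmesh : lam * Δt * Ihat ≤ 1)
    -- comparison of initial data
    (hinit : ∀ p ∈ P, ∀ j ∈ Vset, Φt 0 p j ≤ Φ 0 p j) :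
    ∀ q ≤ Tmax, ∀ p ∈ P, ∀ j ∈ Vset, Φt q p j ≤ Φ q p j := by
  suffices H : ∀ q ≤ Tmax, ∀ p ∈ P, ∀ j ∈ Vset, 0 ≤ Φ q p j - Φt q p j by
    intro q hq p hp j hj
    have := H q hq p hp j hj; linarith
  intro q
  induction q with
  | zero =>
    intro _ p hp j hj
    have := hinit p hp j hj; linarith
  | succ q IH =>
    intro hq1 p hp j hj
    have hqT : q < Tmax := by omega
    have IH' := IH (by omega)
    obtain ⟨pj, hpjmem, hmin⟩ := Finset.exists_min_image (P ×ˢ Vset)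
      (fun z => Φ (q + 1) z.1 z.2 - Φt (q + 1) z.1 z.2)
      ⟨(p, j), Finset.mem_product.mpr ⟨hp, hj⟩⟩
    obtain ⟨hp'P, hj'V⟩ := Finset.mem_product.mp hpjmem
    set p' := pj.1 with hp'def
    set j' := pj.2 with hj'def
    have hmain : 0 ≤ Φ (q + 1) p' j' - Φt (q + 1) p' j' := by
      by_cases hpS : p' ∈ S
      · -- interior point: use the scheme
        have hSr := Finset.mem_Icc.mp (hS hpS)
        have hj'r := Finset.mem_Icc.mp (by rw [hV'] at hj'V; exact hj'V)
        have hyj : 0 ≤ y j' := by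
          rw [hy]
          have h0 : (0 : ℝ) ≤ (j' : ℝ) := by exact_mod_cast hj'r.1
          positivity
        -- the difference equation
        have key :
            -(c p' j') * Δt * (Φ (q + 1) (p' - 1) j' - Φt (q + 1) (p' - 1) j')
              + (1 + a p' j' * Δt) * (Φ (q + 1) p' j' - Φt (q + 1) p' j')
              - b p' j' * Δt * (Φ (q + 1) (p' + 1) j' - Φt (q + 1) (p' + 1) j')
              - e p' j' * Δt * (Φ (q + 1) p' (j' - 1) - Φt (q + 1) p' (j' - 1))
              - f p' j' * Δt * (Φ (q + 1) p' (j' + 1) - Φt (q + 1) p' (j' + 1))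
            = (1 - lam * Δt * Ihat) * (Φ q p' j' - Φt q p' j')
              + lam * Δt *
                ∑ i ∈ Finset.Icc (-(J / 2 : ℤ)) (J / 2 : ℤ),
                  (Φ q (p' + i) j' - Φt q (p' + i) j') * fbar i * Δx := by
          have h1 := hscheme q hqT p' hpS j' hj'V
          have h2 := hscheme' q hqT p' hpS j' hj'V
          have hsum :
              ∑ i ∈ Finset.Icc (-(J / 2 : ℤ)) (J / 2 : ℤ),
                  (Φ q (p' + i) j' - Φt q (p' + i) j') * fbar i * Δx
                = (∑ i ∈ Finset.Icc (-(J / 2 : ℤ)) (J / 2 : ℤ),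
                    Φ q (p' + i) j' * fbar i * Δx)
                  - ∑ i ∈ Finset.Icc (-(J / 2 : ℤ)) (J / 2 : ℤ),
                    Φt q (p' + i) j' * fbar i * Δx := by
            rw [← Finset.sum_sub_distrib]
            exact Finset.sum_congr rfl fun i _ => by ring
          rw [hsum]
          linear_combination h1 - h2
        -- nonnegativity of the coefficients
        have hc0 : 0 ≤ c p' j' := by
          rw [hc]
          have h1 : (0 : ℝ) ≤ y j' / (2 * Δx ^ 2) := by positivity
          split_ifs with h
          · have : k * (θ - x p') / Δx ≤ 0 :=
              div_nonpos_of_nonpos_of_nonneg h.le hΔx.le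
            linarith
          · linarith
        have hb0 : 0 ≤ b p' j' := by
          rw [hb]
          have h1 : (0 : ℝ) ≤ y j' / (2 * Δx ^ 2) := by positivity
          split_ifs with h
          · have : 0 ≤ k * (θ - x p') / Δx := div_nonneg h.le hΔx.le
            linarith
          · linarith
        have he0 : 0 ≤ e p' j' := by
          rw [he]
          have h1 : (0 : ℝ) ≤ ξ ^ 2 * y j' / (2 * Δy ^ 2) := by positivity
          have h2 : (0 : ℝ) ≤ ξ ^ 2 * y j' / Δy ^ 2 := by positivity
          have h4 : (0 : ℝ) ≤ (if j' ≠ (V : ℤ) - 1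
              then ξ ^ 2 * y j' / (2 * Δy ^ 2) else 0) := by
            split_ifs <;> [exact h1; exact le_refl 0]
          have h5 : (0 : ℝ) ≤ (if j' = (V : ℤ) - 1
              then ξ ^ 2 * y j' / Δy ^ 2 else 0) := by
            split_ifs <;> [exact h2; exact le_refl 0]
          have h6 : (if κ * (μ - y j') < 0 ∧ 0 < j' ∧ j' < (V : ℤ) - 1
              then κ * (μ - y j') / Δy else 0) ≤ 0 := by
            split_ifs with hh
            · exact div_nonpos_of_nonpos_of_nonneg hh.1.le hΔy.le
            · exact le_refl 0
          linarith
        have hf0 : 0 ≤ f p' j' := by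
          rw [hf]
          have h1 : (0 : ℝ) ≤ ξ ^ 2 * y j' / (2 * Δy ^ 2) := by positivity
          have h4 : (0 : ℝ) ≤ (if j' ≠ (V : ℤ) - 1
              then ξ ^ 2 * y j' / (2 * Δy ^ 2) else 0) := by
            split_ifs <;> [exact h1; exact le_refl 0]
          have h6 : (0 : ℝ) ≤ (if 0 < κ * (μ - y j') ∧ j' ≠ (V : ℤ) - 1
              then κ * (μ - y j') / Δy else 0) := by
            split_ifs with hh
            · exact div_nonneg hh.1.le hΔy.le
            · exact le_refl 0
          linarith
        -- a dominates b + c + e + f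
        have habs : b p' j' + c p' j' + e p' j' + f p' j' ≤ a p' j' := by
          have hAd : k * (θ - x p') / Δx ≤ |k * (θ - x p')| / Δx := by
            gcongr; exact le_abs_self _
          have hAd2 : -(k * (θ - x p') / Δx) ≤ |k * (θ - x p')| / Δx := by
            rw [← neg_div]; gcongr; exact neg_le_abs _
          have hA0 : (0 : ℝ) ≤ |k * (θ - x p')| / Δx := by positivity
          have hBd : κ * (μ - y j') / Δy ≤ |κ * (μ - y j')| / Δy := by
            gcongr; exact le_abs_self _
          have hBd2 : -(κ * (μ - y j') / Δy) ≤ |κ * (μ - y j')| / Δy := by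
            rw [← neg_div]; gcongr; exact neg_le_abs _
          have hB0 : (0 : ℝ) ≤ |κ * (μ - y j')| / Δy := by positivity
          have hh1 : y j' / (2 * Δx ^ 2) + y j' / (2 * Δx ^ 2) = y j' / Δx ^ 2 := by
            ring
          have hh2 : ξ ^ 2 * y j' / (2 * Δy ^ 2) + ξ ^ 2 * y j' / (2 * Δy ^ 2)
              = ξ ^ 2 * y j' / Δy ^ 2 := by ring
          have tA : (if 0 < k * (θ - x p') then k * (θ - x p') / Δx else 0)
              - (if k * (θ - x p') < 0 then k * (θ - x p') / Δx else 0)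
              ≤ |k * (θ - x p')| / Δx := by
            split_ifs with h h' <;> linarith
          have tB : (if 0 < κ * (μ - y j') ∧ j' ≠ (V : ℤ) - 1
                then κ * (μ - y j') / Δy else 0)
              - (if κ * (μ - y j') < 0 ∧ 0 < j' ∧ j' < (V : ℤ) - 1
                then κ * (μ - y j') / Δy else 0)
              ≤ |κ * (μ - y j')| / Δy := by
            split_ifs with h h'
            · exact absurd h'.1 (by linarith [h.1])
            · linarith
            · linarith
            · linarith
          have tE : (if j' ≠ (V : ℤ) - 1 then ξ ^ 2 * y j' / (2 * Δy ^ 2) else 0)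
              + (if j' = (V : ℤ) - 1 then ξ ^ 2 * y j' / Δy ^ 2 else 0)
              + (if j' ≠ (V : ℤ) - 1 then ξ ^ 2 * y j' / (2 * Δy ^ 2) else 0)
              ≤ ξ ^ 2 * y j' / Δy ^ 2 := by
            rcases eq_or_ne j' ((V : ℤ) - 1) with h | h
            · rw [if_neg (by simp [h]), if_pos h]
              linarith
            · rw [if_pos h, if_neg h]
              linarith
          rw [ha, hb, hc, he, hf]
          linarith [tA, tB, tE]
        -- neighbor memberships
        have hpm1 : p' - 1 ∈ P := by rw [hP, Finset.mem_Icc]; omega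
        have hpp1 : p' + 1 ∈ P := by rw [hP, Finset.mem_Icc]; omega
        -- neighbor bounds
        have hn1 : c p' j' * Δt * (Φ (q + 1) p' j' - Φt (q + 1) p' j')
            ≤ c p' j' * Δt * (Φ (q + 1) (p' - 1) j' - Φt (q + 1) (p' - 1) j') :=
          mul_le_mul_of_nonneg_left
            (by simpa using hmin (p' - 1, j') (Finset.mem_product.mpr ⟨hpm1, hj'V⟩))
            (mul_nonneg hc0 hΔt.le)
        have hn2 : b p' j' * Δt * (Φ (q + 1) p' j' - Φt (q + 1) p' j')
            ≤ b p' j' * Δt * (Φ (q + 1) (p' + 1) j' - Φt (q + 1) (p' + 1) j') :=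
          mul_le_mul_of_nonneg_left
            (by simpa using hmin (p' + 1, j') (Finset.mem_product.mpr ⟨hpp1, hj'V⟩))
            (mul_nonneg hb0 hΔt.le)
        have hn3 : e p' j' * Δt * (Φ (q + 1) p' j' - Φt (q + 1) p' j')
            ≤ e p' j' * Δt * (Φ (q + 1) p' (j' - 1) - Φt (q + 1) p' (j' - 1)) := by
          by_cases hj0 : j' = 0
          · have hy0 : y 0 = 0 := by rw [hy]; simp
            have he00 : e p' j' = 0 := by
              rw [he, hj0, hy0]; simp
            rw [he00]; simp
          · have hjm : j' - 1 ∈ Vset := by rw [hV', Finset.mem_Icc]; omega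
            exact mul_le_mul_of_nonneg_left
              (by simpa using hmin (p', j' - 1) (Finset.mem_product.mpr ⟨hp'P, hjm⟩))
              (mul_nonneg he0 hΔt.le)
        have hn4 : f p' j' * Δt * (Φ (q + 1) p' j' - Φt (q + 1) p' j')
            ≤ f p' j' * Δt * (Φ (q + 1) p' (j' + 1) - Φt (q + 1) p' (j' + 1)) := by
          by_cases hjV : j' = (V : ℤ) - 1
          · have hf00 : f p' j' = 0 := by
              rw [hf, hjV]; simp
            rw [hf00]; simp
          · have hjp : j' + 1 ∈ Vset := by rw [hV', Finset.mem_Icc]; omega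
            exact mul_le_mul_of_nonneg_left
              (by simpa using hmin (p', j' + 1) (Finset.mem_product.mpr ⟨hp'P, hjp⟩))
              (mul_nonneg hf0 hΔt.le)
        -- the right-hand side is nonnegative
        have hrhs : 0 ≤ (1 - lam * Δt * Ihat) * (Φ q p' j' - Φt q p' j')
            + lam * Δt *
              ∑ i ∈ Finset.Icc (-(J / 2 : ℤ)) (J / 2 : ℤ),
                (Φ q (p' + i) j' - Φt q (p' + i) j') * fbar i * Δx := by
          have hterm : 0 ≤ (1 - lam * Δt * Ihat) * (Φ q p' j' - Φt q p' j') :=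
            mul_nonneg (by linarith) (IH' p' hp'P j' hj'V)
          have hsum0 : 0 ≤ ∑ i ∈ Finset.Icc (-(J / 2 : ℤ)) (J / 2 : ℤ),
              (Φ q (p' + i) j' - Φt q (p' + i) j') * fbar i * Δx :=
            Finset.sum_nonneg fun i hi =>
              mul_nonneg
                (mul_nonneg (IH' _ (hSP p' hpS i hi) j' hj'V) (hfbar i hi)) hΔx.le
          have := mul_nonneg (mul_nonneg hlam.le hΔt.le) hsum0
          linarith
        -- conclude at the minimum point
        by_contra hneg
        push_neg at hneg
        have hint : 0 ≤ (a p' j' - (b p' j' + c p' j' + e p' j' + f p' j')) * Δt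
            * (-(Φ (q + 1) p' j' - Φt (q + 1) p' j')) :=
          mul_nonneg (mul_nonneg (sub_nonneg.mpr habs) hΔt.le) (by linarith)
        nlinarith [key, hrhs, hn1, hn2, hn3, hn4, hint]
      · -- boundary point
        have hPS : p' ∈ P \ S := Finset.mem_sdiff.mpr ⟨hp'P, hpS⟩
        have h1 := hbdry q hqT p' hPS j' hj'V
        have h2 := hbdry' q hqT p' hPS j' hj'V
        have := IH' p' hp'P j' hj'V
        rw [h1, h2]; exact this
    have hfin : Φ (q + 1) p' j' - Φt (q + 1) p' j'
        ≤ Φ (q + 1) p j - Φt (q + 1) p j := by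
      simpa using hmin (p, j) (Finset.mem_product.mpr ⟨hp, hj⟩)
    linarith
end
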